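/- For an Arnoldi aggregation of size j, the transient error vector err_k := p̃_k − p_k satisfies err_k^T = − Σ_{i=j−1}^{k−1} π_0^T H_j^i (h_{j,j+1} e_j q_{j+1}^T) P^{k−1−i} for all k ≥ j, where the terms with index i < j−1 vanish because π_0^T H_j^i is supported on the first i+1 coordinates. -/

import Mathlib

open Matrix Finset

/-- Euclidean norm of a row vector. -/
noncomputable def norm2 {n : ℕ} (v : Fin n → ℝ) : ℝ := Real.sqrt (v ⬝ᵥ v)

/-- One Gram–Schmidt projection-subtraction step. -/
noncomputable def gsStep {n : ℕ} (r q : Fin n → ℝ) : Fin n → ℝ := r - (r ⬝ᵥ q) • q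

/-- List `[q_0, …, q_j]` of Arnoldi vectors after `j` expansion steps applied to `(v, M)`. -/
noncomputable def arnoldiList {n : ℕ} (v : Fin n → ℝ) (M : Matrix (Fin n) (Fin n) ℝ) :
    ℕ → List (Fin n → ℝ)
  | 0 => [(norm2 v)⁻¹ • v]
  | j + 1 =>
    let qs := arnoldiList v M j
    let r := qs.foldl gsStep (Matrix.vecMul (qs.getLastD 0) M)
    qs ++ [(norm2 r)⁻¹ • r]

/-- The Arnoldi vector `q_{i+1}` of the paper (0-indexed: `aQ v M i`). -/
noncomputable def aQ {n : ℕ} (v : Fin n → ℝ) (M : Matrix (Fin n) (Fin n) ℝ) (i : ℕ) :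
    Fin n → ℝ :=
  (arnoldiList v M i).getLastD 0

/-- Partial residual `r^{(i)}` in outer step `j` (0-indexed): `q_j M` minus the projections
onto `q_0, …, q_{i-1}`. -/
noncomputable def pres {n : ℕ} (v : Fin n → ℝ) (M : Matrix (Fin n) (Fin n) ℝ) (j i : ℕ) :
    Fin n → ℝ :=
  ((arnoldiList v M j).take i).foldl gsStep (Matrix.vecMul (aQ v M j) M)

/-- The Gram–Schmidt coefficient `h_{j,i}` (0-indexed in both arguments). -/
noncomputable def aH {n : ℕ} (v : Fin n → ℝ) (M : Matrix (Fin n) (Fin n) ℝ) (j i : ℕ) : ℝ :=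
  pres v M j i ⬝ᵥ aQ v M i

/-- The subdiagonal coefficient `h_{j, j+1} = ‖r_{j+1}‖₂` (0-indexed in `j`). -/
noncomputable def hsub {n : ℕ} (v : Fin n → ℝ) (M : Matrix (Fin n) (Fin n) ℝ) (j : ℕ) : ℝ :=
  norm2 (pres v M j (j + 1))

/-- The upper-Hessenberg matrix `H_j` produced by `j` Arnoldi steps. -/
noncomputable def arnoldiHmat {n : ℕ} (v : Fin n → ℝ) (M : Matrix (Fin n) (Fin n) ℝ) (j : ℕ) :
    Matrix (Fin j) (Fin j) ℝ := fun i l =>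
  if (l : ℕ) ≤ (i : ℕ) then aH v M i l
  else if (l : ℕ) = (i : ℕ) + 1 then hsub v M i else 0

/-- The matrix `Q_j` whose rows are the Arnoldi vectors `q_1, …, q_j` of the paper. -/
noncomputable def arnoldiQmat {n : ℕ} (v : Fin n → ℝ) (M : Matrix (Fin n) (Fin n) ℝ) (j : ℕ) :
    Matrix (Fin j) (Fin n) ℝ := fun i => aQ v M i

/-- The Krylov subspace `K^j(v, M) = span{v, vM, …, vM^{j-1}}` (of row vectors). -/
noncomputable def krylov {n : ℕ} (v : Fin n → ℝ) (M : Matrix (Fin n) (Fin n) ℝ) (j : ℕ) :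
    Submodule ℝ (Fin n → ℝ) :=
  Submodule.span ℝ (Set.range fun i : Fin j => Matrix.vecMul v (M ^ (i : ℕ)))

variable {n : ℕ} (v : Fin n → ℝ) (M : Matrix (Fin n) (Fin n) ℝ)

lemma arnoldiList_length (j : ℕ) : (arnoldiList v M j).length = j + 1 := by
  induction j with
  | zero => rfl
  | succ j ih => simp [arnoldiList, ih]

lemma pres_top (j : ℕ) : pres v M j (j+1) =
    (arnoldiList v M j).foldl gsStep (Matrix.vecMul (aQ v M j) M) := by
  unfold pres
  rw [List.take_of_length_le (le_of_eq (arnoldiList_length v M j))]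

lemma arnoldiList_succ (j : ℕ) : arnoldiList v M (j+1) =
    arnoldiList v M j ++ [(norm2 (pres v M j (j+1)))⁻¹ • pres v M j (j+1)] := by
  rw [pres_top]; rfl

lemma aQ_succ (j : ℕ) : aQ v M (j+1) = (norm2 (pres v M j (j+1)))⁻¹ • pres v M j (j+1) := by
  unfold aQ; rw [arnoldiList_succ]; exact List.getLastD_concat

lemma arnoldiList_getElem (j i : ℕ) (h : i ≤ j) :
    (arnoldiList v M j)[i]'(by rw [arnoldiList_length]; omega) = aQ v M i := by
  induction j with
  | zero =>
    have : i = 0 := by omega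
    subst this; rfl
  | succ j ih =>
    rcases Nat.lt_or_ge i (j+1) with h' | h'
    · rw [List.getElem_of_eq (arnoldiList_succ v M j),
        List.getElem_append_left (by rw [arnoldiList_length]; omega)]
      exact ih (by omega)
    · have hij : i = j + 1 := by omega
      subst hij
      rw [List.getElem_of_eq (arnoldiList_succ v M j), aQ_succ]
      have hl : (arnoldiList v M j).length = j + 1 := arnoldiList_length v M j
      simp [List.getElem_append_right, hl]

lemma pres_succ (jj t : ℕ) (h : t ≤ jj) :
    pres v M jj (t+1) = pres v M jj t - aH v M jj t • aQ v M t := by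
  have ht : t < (arnoldiList v M jj).length := by rw [arnoldiList_length]; omega
  unfold pres
  rw [List.take_succ, List.getElem?_eq_getElem ht]
  rw [arnoldiList_getElem v M jj t h]
  simp only [Option.toList_some, List.foldl_append, List.foldl_cons, List.foldl_nil]
  rfl

lemma qM_decomp (i : ℕ) : ∀ t, t ≤ i + 1 →
    Matrix.vecMul (aQ v M i) M = pres v M i t + ∑ l ∈ Finset.range t, aH v M i l • aQ v M l := by
  intro t
  induction t with
  | zero => intro _; simp [pres]
  | succ t ih =>
    intro ht
    rw [pres_succ v M i t (by omega), Finset.sum_range_succ, ih (by omega)]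
    abel

lemma dot_self_eq_zero_of_norm2 {w : Fin n → ℝ} (h : norm2 w = 0) : w = 0 := by
  have hnn : 0 ≤ w ⬝ᵥ w := Finset.sum_nonneg fun i _ => mul_self_nonneg _
  have h' : w ⬝ᵥ w ≤ 0 := Real.sqrt_eq_zero'.mp h
  exact dotProduct_self_eq_zero.mp (le_antisymm h' hnn)

lemma hsub_smul_aQ (i : ℕ) : hsub v M i • aQ v M (i+1) = pres v M i (i+1) := by
  rw [aQ_succ]
  rcases eq_or_ne (norm2 (pres v M i (i+1))) 0 with h0 | h0
  · rw [hsub, h0, zero_smul]; exact (dot_self_eq_zero_of_norm2 h0).symm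
  · rw [smul_smul, hsub, mul_inv_cancel₀ h0, one_smul]

noncomputable def Emat {n : ℕ} (v : Fin n → ℝ) (M : Matrix (Fin n) (Fin n) ℝ) (j : ℕ) :
    Matrix (Fin j) (Fin n) ℝ :=
  hsub v M (j-1) •
    Matrix.vecMulVec (fun s : Fin j => if (s : ℕ) + 1 = j then (1:ℝ) else 0) (aQ v M j)

lemma QP_relation (j : ℕ) :
    arnoldiQmat v M j * M = arnoldiHmat v M j * arnoldiQmat v M j + Emat v M j := by
  ext i s
  have key := congrFun (qM_decomp v M (i : ℕ) ((i : ℕ)+1) le_rfl) s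
  rw [← hsub_smul_aQ] at key
  -- key : vecMul (aQ i) M s = (hsub i • aQ (i+1)) s + (∑ l ∈ range (i+1), aH i l • aQ l) s
  have lhs_eq : (arnoldiQmat v M j * M) i s = Matrix.vecMul (aQ v M (i : ℕ)) M s := by
    simp [Matrix.mul_apply, Matrix.vecMul, dotProduct, arnoldiQmat]
  rw [lhs_eq, key]
  -- now compute the RHS
  have hQ : ∀ l : Fin j, arnoldiQmat v M j l s = aQ v M (l : ℕ) s := fun _ => rfl
  rw [Matrix.add_apply, Matrix.mul_apply]
  have sum_eq : ∑ l : Fin j, arnoldiHmat v M j i l * arnoldiQmat v M j l s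
      = ∑ l ∈ Finset.range j, (if l ≤ (i : ℕ) then aH v M i l
          else if l = (i : ℕ) + 1 then hsub v M i else 0) * aQ v M l s := by
    rw [← Fin.sum_univ_eq_sum_range]
    rfl
  rw [sum_eq]
  have hi : (i : ℕ) < j := i.isLt
  rcases Nat.lt_or_ge ((i : ℕ) + 1) j with hcase | hcase
  · -- i+1 < j : the hsub term is inside the Fin j sum, Emat row is 0
    have hE : Emat v M j i s = 0 := by
      simp only [Emat, Matrix.smul_apply, Matrix.vecMulVec_apply, if_neg (by omega : ¬((i:ℕ)+1 = j))]
      simp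
    rw [hE, add_zero]
    rw [Finset.range_eq_Ico, Finset.range_eq_Ico, ← Finset.sum_Ico_consecutive _ (Nat.zero_le ((i:ℕ)+1)) (le_of_lt hcase)]
    have h2 : ∑ l ∈ Finset.Ico ((i:ℕ)+1) j, (if l ≤ (i : ℕ) then aH v M i l
          else if l = (i : ℕ) + 1 then hsub v M i else 0) * aQ v M l s
        = hsub v M i * aQ v M ((i:ℕ)+1) s := by
      rw [Finset.sum_eq_single_of_mem ((i:ℕ)+1) (Finset.mem_Ico.mpr ⟨le_rfl, hcase⟩)]
      · rw [if_neg (by omega), if_pos rfl]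
      · intro b hb hne
        rw [Finset.mem_Ico] at hb
        rw [if_neg (by omega), if_neg (by omega), zero_mul]
    have h1 : ∑ l ∈ Finset.Ico 0 ((i:ℕ)+1), (if l ≤ (i : ℕ) then aH v M i l
          else if l = (i : ℕ) + 1 then hsub v M i else 0) * aQ v M l s
        = ∑ l ∈ Finset.range ((i:ℕ)+1), aH v M i l * aQ v M l s := by
      rw [← Finset.range_eq_Ico]
      exact Finset.sum_congr rfl fun l hl => by
        rw [Finset.mem_range] at hl; rw [if_pos (by omega)]
    rw [h1, h2]
    simp only [Pi.add_apply, Pi.smul_apply, Finset.sum_apply, smul_eq_mul]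
    rw [← Finset.range_eq_Ico]
    exact add_comm _ _
  · -- i+1 = j : the hsub term is the Emat row
    have hij : (i : ℕ) + 1 = j := by omega
    have hE : Emat v M j i s = hsub v M i * aQ v M ((i:ℕ)+1) s := by
      simp only [Emat, Matrix.smul_apply, Matrix.vecMulVec_apply, if_pos hij]
      rw [hij]
      have : j - 1 = (i : ℕ) := by omega
      rw [this]
      simp [mul_comm]
    rw [hE]
    have h1 : ∑ l ∈ Finset.range j, (if l ≤ (i : ℕ) then aH v M i l
          else if l = (i : ℕ) + 1 then hsub v M i else 0) * aQ v M l s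
        = ∑ l ∈ Finset.range ((i:ℕ)+1), aH v M i l * aQ v M l s := by
      rw [hij]
      exact Finset.sum_congr rfl fun l hl => by
        rw [Finset.mem_range] at hl; rw [if_pos (by omega)]
    rw [h1]
    simp only [Pi.add_apply, Pi.smul_apply, Finset.sum_apply, smul_eq_mul]
    rw [hij]
    exact add_comm _ _


lemma telescope {j : ℕ} (A : Matrix (Fin j) (Fin j) ℝ) (Q C : Matrix (Fin j) (Fin n) ℝ)
    (P : Matrix (Fin n) (Fin n) ℝ) (h : Q * P = A * Q + C) (k : ℕ) :
    A ^ k * Q - Q * P ^ k = -(∑ i ∈ Finset.range k, A ^ i * C * P ^ (k - 1 - i)) := by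
  induction k with
  | zero => simp
  | succ k ih =>
    rw [Finset.sum_range_succ']
    have e1 : ∀ i ∈ Finset.range k,
        A ^ (i+1) * C * P ^ (k + 1 - 1 - (i+1)) = A * (A ^ i * C * P ^ (k - 1 - i)) := by
      intro i hi
      have : k + 1 - 1 - (i+1) = k - 1 - i := by omega
      rw [this, pow_succ', Matrix.mul_assoc A, Matrix.mul_assoc A]
    rw [Finset.sum_congr rfl e1, ← Matrix.mul_sum]
    have h2 : A * (A ^ k * Q) - A * (Q * P ^ k)
        = -(A * ∑ i ∈ Finset.range k, A ^ i * C * P ^ (k - 1 - i)) := by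
      rw [← Matrix.mul_sub, ih, Matrix.mul_neg]
    have h3 : Q * P ^ (k+1) = A * (Q * P ^ k) + C * P ^ k := by
      rw [pow_succ', ← Matrix.mul_assoc, h, Matrix.add_mul, Matrix.mul_assoc]
    have h4 : A ^ (k+1) * Q = A * (A ^ k * Q) := by
      rw [pow_succ', Matrix.mul_assoc]
    rw [h3, h4, pow_zero, Matrix.one_mul]
    have : k + 1 - 1 - 0 = k := by omega
    rw [this]
    rw [neg_add, ← h2]
    abel

lemma pivec_support (j : ℕ) (i : ℕ) :
    ∀ l : Fin j, i < (l : ℕ) →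
      Matrix.vecMul (fun s : Fin j => if (s : ℕ) = 0 then norm2 v else 0)
        (arnoldiHmat v M j ^ i) l = 0 := by
  induction i with
  | zero =>
    intro l hl
    rw [pow_zero, Matrix.vecMul_one]
    exact if_neg (by omega)
  | succ i ih =>
    intro l hl
    rw [pow_succ, ← Matrix.vecMul_vecMul]
    show (Matrix.vecMul _ (arnoldiHmat v M j)) l = 0
    rw [Matrix.vecMul]
    apply Finset.sum_eq_zero
    intro t _
    rcases Nat.lt_or_ge i (t : ℕ) with h | h
    · exact mul_eq_zero_of_left (ih t h) _
    · have hz : arnoldiHmat v M j t l = 0 := by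
        unfold arnoldiHmat
        rw [if_neg (by omega), if_neg (by omega)]
      exact mul_eq_zero_of_right _ hz

lemma vecMul_finsum {m p : ℕ} {ι : Type*} (w : Fin m → ℝ) (s : Finset ι)
    (A : ι → Matrix (Fin m) (Fin p) ℝ) :
    Matrix.vecMul w (∑ i ∈ s, A i) = ∑ i ∈ s, Matrix.vecMul w (A i) := by
  classical
  induction s using Finset.induction with
  | empty => simp [Matrix.vecMul_zero]
  | insert _ _ h ih => rw [Finset.sum_insert h, Finset.sum_insert h, Matrix.vecMul_add, ih]

lemma vecMul_negmat {m p : ℕ} (w : Fin m → ℝ) (A : Matrix (Fin m) (Fin p) ℝ) :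
    Matrix.vecMul w (-A) = -(Matrix.vecMul w A) := by
  funext s
  simp [Matrix.vecMul, dotProduct, Finset.sum_neg_distrib]

lemma pivec_E (hj : 0 < j) (i : ℕ) (hi : i < j - 1) :
    Matrix.vecMul (Matrix.vecMul (fun s : Fin j => if (s : ℕ) = 0 then norm2 v else 0)
      (arnoldiHmat v M j ^ i)) (Emat v M j) = 0 := by
  funext s
  set x := Matrix.vecMul (fun s : Fin j => if (s : ℕ) = 0 then norm2 v else 0)
      (arnoldiHmat v M j ^ i) with hx
  show Matrix.vecMul x (Emat v M j) s = 0
  rw [Matrix.vecMul]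
  apply Finset.sum_eq_zero
  intro t _
  rcases eq_or_ne ((t : ℕ) + 1) j with ht | ht
  · have : x t = 0 := pivec_support v M j i t (by omega)
    exact mul_eq_zero_of_left this _
  · have : Emat v M j t s = 0 := by
      simp only [Emat, Matrix.smul_apply, Matrix.vecMulVec_apply, if_neg ht]
      simp
    exact mul_eq_zero_of_right _ this

lemma pivec_Q (hj : 0 < j) (hv : norm2 v ≠ 0) :
    Matrix.vecMul (fun s : Fin j => if (s : ℕ) = 0 then norm2 v else 0)
      (arnoldiQmat v M j) = v := by
  funext s
  have hrw : (Matrix.vecMul (fun s : Fin j => if (s : ℕ) = 0 then norm2 v else 0)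
      (arnoldiQmat v M j)) s
      = ∑ l : Fin j, (if (l : ℕ) = 0 then norm2 v else 0) * arnoldiQmat v M j l s := rfl
  rw [hrw, Finset.sum_eq_single_of_mem (⟨0, hj⟩ : Fin j) (Finset.mem_univ _)]
  · rw [if_pos (show ((⟨0, hj⟩ : Fin j) : ℕ) = 0 from rfl)]
    have : arnoldiQmat v M j ⟨0, hj⟩ s = ((norm2 v)⁻¹ • v) s := rfl
    rw [this]
    simp only [Pi.smul_apply, smul_eq_mul]
    rw [← mul_assoc, mul_inv_cancel₀ hv, one_mul]
  · intro b _ hb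
    have : (b : ℕ) ≠ 0 := fun h => hb (Fin.ext h)
    rw [if_neg this, zero_mul]

/-- closed form for the transient error of an Arnoldi aggregation of size `j`:
`err_k = −Σ_{i=j-1}^{k-1} π₀ H_j^i (h_{j,j+1} e_j q_{j+1}^T) P^{k-1-i}` for `k ≥ j`. -/
theorem arnoldi_error_closed_form {n j : ℕ} (hj : 0 < j)
    (P : Matrix (Fin n) (Fin n) ℝ)
    (hPnn : ∀ i l, 0 ≤ P i l) (hProw : ∀ i, ∑ l, P i l = 1)
    (p₀ : Fin n → ℝ) (hp₀nn : ∀ s, 0 ≤ p₀ s) (hp₀sum : ∑ s, p₀ s = 1)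
    (hrun : ∀ i, i + 1 < j → hsub p₀ P i ≠ 0) :
    ∀ k : ℕ, j ≤ k →
      Matrix.vecMul
          (Matrix.vecMul (fun s : Fin j => if (s : ℕ) = 0 then norm2 p₀ else 0)
            ((arnoldiHmat p₀ P j) ^ k))
          (arnoldiQmat p₀ P j)
        - Matrix.vecMul p₀ (P ^ k) =
      -(∑ i ∈ Finset.Ico (j - 1) k,
          Matrix.vecMul
            (Matrix.vecMul
              (Matrix.vecMul (fun s : Fin j => if (s : ℕ) = 0 then norm2 p₀ else 0)
                ((arnoldiHmat p₀ P j) ^ i))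
              (hsub p₀ P (j - 1) •
                Matrix.vecMulVec (fun s : Fin j => if (s : ℕ) + 1 = j then (1 : ℝ) else 0)
                  (aQ p₀ P j)))
            (P ^ (k - 1 - i))) := by
  intro k hk
  set π : Fin j → ℝ := fun s : Fin j => if (s : ℕ) = 0 then norm2 p₀ else 0 with hπ
  have hp₀ne : p₀ ≠ 0 := by
    intro h
    rw [h] at hp₀sum
    simp at hp₀sum
  have hnorm : norm2 p₀ ≠ 0 := fun h => hp₀ne (dot_self_eq_zero_of_norm2 h)
  have hQP := QP_relation p₀ P j
  have tel := telescope (arnoldiHmat p₀ P j) (arnoldiQmat p₀ P j) (Emat p₀ P j) P hQP k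
  have hπQ : Matrix.vecMul π (arnoldiQmat p₀ P j) = p₀ := pivec_Q p₀ P hj hnorm
  have e1 : Matrix.vecMul (Matrix.vecMul π ((arnoldiHmat p₀ P j) ^ k)) (arnoldiQmat p₀ P j)
      = Matrix.vecMul π ((arnoldiHmat p₀ P j) ^ k * arnoldiQmat p₀ P j) :=
    Matrix.vecMul_vecMul _ _ _
  have e2 : Matrix.vecMul p₀ (P ^ k) = Matrix.vecMul π (arnoldiQmat p₀ P j * P ^ k) := by
    conv_rhs => rw [← Matrix.vecMul_vecMul, hπQ]
  rw [e1, e2, ← Matrix.vecMul_sub, tel, vecMul_negmat, vecMul_finsum]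
  rw [Finset.range_eq_Ico,
    ← Finset.sum_Ico_consecutive _ (Nat.zero_le (j - 1)) (le_trans (Nat.sub_le j 1) hk)]
  have hz : ∑ i ∈ Finset.Ico 0 (j - 1),
      Matrix.vecMul π (arnoldiHmat p₀ P j ^ i * Emat p₀ P j * P ^ (k - 1 - i)) = 0 := by
    apply Finset.sum_eq_zero
    intro i hi
    rw [Finset.mem_Ico] at hi
    rw [← Matrix.vecMul_vecMul, ← Matrix.vecMul_vecMul, pivec_E p₀ P hj i hi.2,
      Matrix.zero_vecMul]
  rw [hz, zero_add]
  congr 1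
  apply Finset.sum_congr rfl
  intro i _
  rw [← Matrix.vecMul_vecMul, ← Matrix.vecMul_vecMul]
  rfl
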